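/- Let μ and ν be finitely supported probability measures on S with q(μ,ν) < ε. Then for any random variable X with law(X) = μ, there exists a random variable Y on the same nonatomic probability space with law(Y) = ν and ρ(X,Y) < ε. -/

import Mathlib

open MeasureTheory Filter Topology Set
open scoped ENNReal NNReal

/-- The Ky Fan distance between two `S`-valued random variables on `(Ω, P)`:
`inf {ε > 0 : P{ω : d(X ω, Y ω) ≥ ε} ≤ ε}`. -/
noncomputable def kyFanDist {Ω S : Type*} [MeasurableSpace Ω] [PseudoMetricSpace S]
    (P : Measure Ω) (X Y : Ω → S) : ℝ :=
  sInf {ε : ℝ | 0 < ε ∧ (P {ω | ε ≤ dist (X ω) (Y ω)}).toReal ≤ ε}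

/-- A measure is nonatomic if every set of positive measure contains a measurable
subset of strictly smaller positive measure. -/
def Nonatomic {Ω : Type*} [MeasurableSpace Ω] (P : Measure Ω) : Prop :=
  ∀ A : Set Ω, MeasurableSet A → 0 < P A →
    ∃ B ⊆ A, MeasurableSet B ∧ 0 < P B ∧ P B < P A

/-- A finitely supported measure: a finite convex combination of Dirac measures. -/
def FinitelySupported {S : Type*} [MeasurableSpace S] (μ : Measure S) : Prop :=
  ∃ (n : ℕ) (c : Fin n → ℝ≥0∞) (a : Fin n → S),
    (∑ i, c i) = 1 ∧ μ = ∑ i, c i • Measure.dirac (a i)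

/-- Continuity of a path of random variables with respect to the Ky Fan metric
(equivalently, the topology of convergence in probability). -/
def KyFanContinuousOn {Ω S : Type*} [MeasurableSpace Ω] [PseudoMetricSpace S]
    (P : Measure Ω) (γ : ℝ → Ω → S) (A : Set ℝ) : Prop :=
  ∀ t ∈ A, ∀ ε > 0, ∃ δ > 0, ∀ s ∈ A, |s - t| < δ → kyFanDist P (γ s) (γ t) < ε

/-- Continuity of a path of measures with respect to the Lévy–Prokhorov metric. -/
def LPContinuousOn {S : Type*} [MeasurableSpace S] [PseudoMetricSpace S]
    (α : ℝ → Measure S) (A : Set ℝ) : Prop :=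
  ∀ t ∈ A, ∀ ε > 0, ∃ δ > 0, ∀ s ∈ A, |s - t| < δ → levyProkhorovDist (α s) (α t) < ε

/-- A polygonal path in the space of measures with vertices in `V`: there is a partition
`0 = t₀ < t₁ < ⋯ < t_{n+1} = 1` and vertices `μᵢ ∈ V` such that on `[tᵢ, tᵢ₊₁]` the path
is the affine interpolation of `μᵢ` and `μᵢ₊₁`. -/
def IsPolygonalWithVertices {S : Type*} [MeasurableSpace S] (β : ℝ → Measure S)
    (V : Set (Measure S)) : Prop :=
  ∃ (n : ℕ) (t : Fin (n + 2) → ℝ) (μ : Fin (n + 2) → Measure S),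
    StrictMono t ∧ t 0 = 0 ∧ t (Fin.last (n + 1)) = 1 ∧ (∀ i, μ i ∈ V) ∧
    ∀ (i : Fin (n + 1)), ∀ s ∈ Set.Icc (t i.castSucc) (t i.succ),
      β s = ENNReal.ofReal ((t i.succ - s) / (t i.succ - t i.castSucc)) • μ i.castSucc
        + ENNReal.ofReal ((s - t i.castSucc) / (t i.succ - t i.castSucc)) • μ i.succ




lemma Nonatomic.half {Ω : Type*} [MeasurableSpace Ω] {P : Measure Ω}
    [IsFiniteMeasure P] (hna : Nonatomic P) {A : Set Ω} (hA : MeasurableSet A)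
    (hpos : 0 < P A) :
    ∃ B ⊆ A, MeasurableSet B ∧ 0 < P B ∧ P B ≤ P A / 2 := by
  obtain ⟨B, hBA, hBm, hB0, hBlt⟩ := hna A hA hpos
  by_cases h : P B ≤ P A / 2
  · exact ⟨B, hBA, hBm, hB0, h⟩
  · refine ⟨A \ B, diff_subset, hA.diff hBm, ?_, ?_⟩
    · rwa [measure_diff hBA hBm.nullMeasurableSet (measure_ne_top P B), tsub_pos_iff_lt]
    · rw [measure_diff hBA hBm.nullMeasurableSet (measure_ne_top P B)]
      push_neg at h
      calc P A - P B ≤ P A - P A / 2 := tsub_le_tsub_left h.le _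
        _ = P A / 2 := ENNReal.sub_half (measure_ne_top P A)

lemma Nonatomic.small {Ω : Type*} [MeasurableSpace Ω] {P : Measure Ω}
    [IsProbabilityMeasure P] (hna : Nonatomic P) {A : Set Ω} (hA : MeasurableSet A)
    (hpos : 0 < P A) {δ : ℝ≥0∞} (hδ : 0 < δ) :
    ∃ B ⊆ A, MeasurableSet B ∧ 0 < P B ∧ P B ≤ δ := by
  obtain ⟨n, hn⟩ := ENNReal.exists_inv_two_pow_lt hδ.ne'
  have key : ∀ n : ℕ, ∃ B ⊆ A, MeasurableSet B ∧ 0 < P B ∧ P B ≤ 2⁻¹ ^ n := by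
    intro n
    induction n with
    | zero => exact ⟨A, subset_rfl, hA, hpos, by simpa using prob_le_one⟩
    | succ n ih =>
      obtain ⟨B, hBA, hBm, hB0, hBle⟩ := ih
      obtain ⟨C, hCB, hCm, hC0, hCle⟩ := hna.half hBm hB0
      refine ⟨C, hCB.trans hBA, hCm, hC0, ?_⟩
      calc P C ≤ P B / 2 := hCle
        _ ≤ 2⁻¹ ^ n / 2 := by gcongr
        _ = 2⁻¹ ^ (n + 1) := by rw [pow_succ, ENNReal.div_eq_inv_mul, mul_comm]
  obtain ⟨B, hBA, hBm, hB0, hBle⟩ := key n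
  exact ⟨B, hBA, hBm, hB0, hBle.trans hn.le⟩




lemma Nonatomic.exists_subset_measure_eq {Ω : Type*} [MeasurableSpace Ω] {P : Measure Ω}
    [IsProbabilityMeasure P] (hna : Nonatomic P) {A : Set Ω} (hA : MeasurableSet A)
    {r : ℝ≥0∞} (hr : r ≤ P A) : ∃ B ⊆ A, MeasurableSet B ∧ P B = r := by
  classical
  set Good : Set Ω → Prop := fun B => B ⊆ A ∧ MeasurableSet B ∧ P B ≤ r with hGood
  -- near-maximal extension
  have claim : ∀ B, Good B → ∃ C, C ⊆ A \ B ∧ MeasurableSet C ∧ P B + P C ≤ r ∧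
      ∀ C', C' ⊆ A \ B → MeasurableSet C' → P B + P C' ≤ r → P C' ≤ 2 * P C := by
    intro B hB
    set s : ℝ≥0∞ := ⨆ (C' : {C' // C' ⊆ A \ B ∧ MeasurableSet C' ∧ P B + P C' ≤ r}), P C'.1 with hs
    by_cases hs0 : s = 0
    · refine ⟨∅, empty_subset _, MeasurableSet.empty, by simpa using hB.2.2, ?_⟩
      intro C' h1 h2 h3
      have : P C' ≤ s := le_iSup_of_le ⟨C', h1, h2, h3⟩ le_rfl
      simpa [hs0] using this
    · have hstop : s ≠ ∞ := by
        refine ne_of_lt (lt_of_le_of_lt (iSup_le fun C' => ?_) (by norm_num : (1:ℝ≥0∞) < ∞))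
        exact prob_le_one
      have hlt : s / 2 < s := ENNReal.half_lt_self hs0 hstop
      obtain ⟨⟨C, h1, h2, h3⟩, hC⟩ := lt_iSup_iff.mp hlt
      refine ⟨C, h1, h2, h3, ?_⟩
      intro C' h1' h2' h3'
      have hle : P C' ≤ s := le_iSup_of_le ⟨C', h1', h2', h3'⟩ le_rfl
      have h2 : s ≤ 2 * P C := by
        calc s = s / 2 * 2 := (ENNReal.div_mul_cancel two_ne_zero ENNReal.ofNat_ne_top).symm
          _ ≤ P C * 2 := mul_le_mul_left hC.le 2
          _ = 2 * P C := mul_comm _ _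
      exact hle.trans h2
  set F : Set Ω → Set Ω := fun B => if h : Good B then (claim B h).choose else ∅ with hF
  set BSeq : ℕ → Set Ω := fun n => Nat.rec ∅ (fun _ B => B ∪ F B) n with hBSeq
  have hB0 : BSeq 0 = ∅ := rfl
  have hBsucc : ∀ n, BSeq (n + 1) = BSeq n ∪ F (BSeq n) := fun n => rfl
  have hGoodSeq : ∀ n, Good (BSeq n) := by
    intro n
    induction n with
    | zero => exact ⟨empty_subset _, MeasurableSet.empty, by rw [hB0]; simp⟩
    | succ n ih =>
      rw [hBsucc]
      obtain ⟨hC1, hC2, hC3, _⟩ := (claim _ ih).choose_spec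
      have hFB : F (BSeq n) = (claim _ ih).choose := dif_pos ih
      refine ⟨union_subset ih.1 (by rw [hFB]; exact hC1.trans diff_subset), 
        ih.2.1.union (by rw [hFB]; exact hC2), ?_⟩
      calc P (BSeq n ∪ F (BSeq n)) ≤ P (BSeq n) + P (F (BSeq n)) := measure_union_le _ _
        _ ≤ r := by rw [hFB]; exact hC3
  have hMono : Monotone BSeq := monotone_nat_of_le_succ fun n => by
    rw [hBsucc]; exact subset_union_left
  set Binf := ⋃ n, BSeq n with hBinf
  have hBinfm : MeasurableSet Binf := MeasurableSet.iUnion fun n => (hGoodSeq n).2.1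
  have hBinfA : Binf ⊆ A := iUnion_subset fun n => (hGoodSeq n).1
  have hPBinf : P Binf = ⨆ n, P (BSeq n) :=
    hMono.measure_iUnion
  have hPle : P Binf ≤ r := by rw [hPBinf]; exact iSup_le fun n => (hGoodSeq n).2.2
  refine ⟨Binf, hBinfA, hBinfm, hPle.antisymm (not_lt.mp fun hlt => ?_)⟩
  -- suppose P Binf < r
  have hABpos : 0 < P (A \ Binf) := by
    rw [measure_diff hBinfA hBinfm.nullMeasurableSet (measure_ne_top P _), tsub_pos_iff_lt]
    exact lt_of_lt_of_le hlt hr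
  obtain ⟨C, hCsub, hCm, hC0, hCle⟩ := hna.small (hA.diff hBinfm) hABpos
    (δ := r - P Binf) (by rwa [tsub_pos_iff_lt])
  -- C fits above every BSeq n
  have hfits : ∀ n, P (BSeq n) + P C ≤ r := by
    intro n
    calc P (BSeq n) + P C ≤ P Binf + (r - P Binf) := by
          exact add_le_add (measure_mono (subset_iUnion BSeq n)) hCle
      _ = r := add_tsub_cancel_of_le hlt.le
  have hCsub' : ∀ n, C ⊆ A \ BSeq n := fun n =>
    hCsub.trans (diff_subset_diff_right (subset_iUnion BSeq n))
  -- so each step adds at least P C / 2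
  have hstep : ∀ n, P C / 2 ≤ P (F (BSeq n)) := by
    intro n
    obtain ⟨hC1, hC2, hC3, hmax⟩ := (claim _ (hGoodSeq n)).choose_spec
    have hFB : F (BSeq n) = (claim _ (hGoodSeq n)).choose := dif_pos (hGoodSeq n)
    rw [hFB]
    have := hmax C (hCsub' n) hCm (hfits n)
    rwa [ENNReal.div_le_iff_le_mul (Or.inl two_ne_zero) (Or.inl ENNReal.ofNat_ne_top), mul_comm]
  have hgrow : ∀ n : ℕ, (n : ℝ≥0∞) * (P C / 2) ≤ P (BSeq n) := by
    intro n
    induction n with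
    | zero => simp
    | succ n ih =>
      rw [hBsucc]
      have hdisj : Disjoint (BSeq n) (F (BSeq n)) := by
        obtain ⟨hC1, _, _, _⟩ := (claim _ (hGoodSeq n)).choose_spec
        have hFB : F (BSeq n) = (claim _ (hGoodSeq n)).choose := dif_pos (hGoodSeq n)
        exact Disjoint.mono_right (hFB ▸ hC1) disjoint_sdiff_right
      have hFm : MeasurableSet (F (BSeq n)) := by
        have hFB : F (BSeq n) = (claim _ (hGoodSeq n)).choose := dif_pos (hGoodSeq n)
        rw [hFB]; exact (claim _ (hGoodSeq n)).choose_spec.2.1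
      rw [measure_union hdisj hFm]
      push_cast
      rw [add_mul, one_mul]
      exact add_le_add ih (hstep n)
  -- contradiction
  have hCpos : (0:ℝ≥0∞) < P C / 2 := ENNReal.div_pos hC0.ne' ENNReal.ofNat_ne_top
  have hrne : r ≠ ∞ := ne_top_of_le_ne_top (measure_ne_top P A) hr
  have hhne : P C / 2 ≠ ∞ := ne_top_of_le_ne_top (measure_ne_top P C) ENNReal.half_le_self
  obtain ⟨n, hn⟩ := ENNReal.exists_nat_gt (ENNReal.div_lt_top hrne hCpos.ne').ne
  rw [ENNReal.div_lt_iff (Or.inl hCpos.ne') (Or.inl hhne)] at hn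
  exact absurd ((hgrow n).trans (hGoodSeq n).2.2) (not_le.mpr hn)




lemma Nonatomic.exists_partition {Ω ι : Type*} [MeasurableSpace Ω] {P : Measure Ω}
    [IsProbabilityMeasure P] (hna : Nonatomic P) [DecidableEq ι] (t : Finset ι) :
    ∀ (A : Set Ω), MeasurableSet A → ∀ (m : ι → ℝ≥0∞), (∑ i ∈ t, m i) = P A →
    ∃ B : ι → Set Ω, (∀ i, MeasurableSet (B i)) ∧ (∀ i ∈ t, B i ⊆ A) ∧
      (∀ i ∈ t, P (B i) = m i) ∧ ((↑t : Set ι).PairwiseDisjoint B) := by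
  classical
  induction t using Finset.cons_induction with
  | empty =>
    intro A hA m _
    exact ⟨fun _ => ∅, fun _ => MeasurableSet.empty, fun i hi => by simp at hi,
      fun i hi => by simp at hi, by simp⟩
  | cons i t hit ih =>
    intro A hA m hsum
    rw [Finset.sum_cons] at hsum
    have hmi : m i ≤ P A := by rw [← hsum]; exact le_self_add
    have hmitop : m i ≠ ⊤ := ne_top_of_le_ne_top (measure_ne_top P A) hmi
    obtain ⟨Bi, hBiA, hBim, hBiP⟩ := hna.exists_subset_measure_eq hA hmi
    have hrest : (∑ j ∈ t, m j) = P (A \ Bi) := by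
      rw [measure_diff hBiA hBim.nullMeasurableSet (measure_ne_top P Bi), hBiP, ← hsum,
        ENNReal.add_sub_cancel_left hmitop]
    obtain ⟨B, hBm, hBA, hBP, hBdisj⟩ := ih (A \ Bi) (hA.diff hBim) m hrest
    refine ⟨Function.update B i Bi, ?_, ?_, ?_, ?_⟩
    · intro j
      rcases eq_or_ne j i with rfl | hj
      · simpa using hBim
      · simpa [Function.update_of_ne hj] using hBm j
    · intro j hj
      rcases Finset.mem_cons.mp hj with rfl | hjt
      · simpa using hBiA
      · have hji : j ≠ i := fun h => hit (h ▸ hjt)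
        rw [Function.update_of_ne hji]
        exact (hBA j hjt).trans diff_subset
    · intro j hj
      rcases Finset.mem_cons.mp hj with rfl | hjt
      · simpa using hBiP
      · have hji : j ≠ i := fun h => hit (h ▸ hjt)
        rw [Function.update_of_ne hji]
        exact hBP j hjt
    · intro j hj k hk hjk
      simp only [Finset.coe_cons, Set.mem_insert_iff, Finset.mem_coe] at hj hk
      rcases hj with rfl | hjt <;> rcases hk with rfl | hkt
      · exact absurd rfl hjk
      · have hki : k ≠ j := fun h => hit (h ▸ hkt)
        simp only [Function.onFun, Function.update_self, Function.update_of_ne hki]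
        exact Disjoint.mono_right (hBA k hkt) disjoint_sdiff_right
      · have hji : j ≠ k := fun h => hit (h ▸ hjt)
        simp only [Function.onFun, Function.update_self, Function.update_of_ne hji]
        exact Disjoint.mono_left (hBA j hjt) disjoint_sdiff_left
      · have hji : j ≠ i := fun h => hit (h ▸ hjt)
        have hki : k ≠ i := fun h => hit (h ▸ hkt)
        simp only [Function.onFun, Function.update_of_ne hji, Function.update_of_ne hki]
        exact hBdisj hjt hkt hjk


-- helper: sum over subtype-filter equals sum over subset
lemma sum_attach_filter {S M : Type*} [AddCommMonoid M] [DecidableEq S]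
    (T B : Finset S) (hB : B ⊆ T) (h : S → M) :
    ∑ s ∈ Finset.univ.filter (fun s : {x // x ∈ T} => ↑s ∈ B), h ↑s = ∑ s ∈ B, h s := by
  classical
  rw [Finset.univ_eq_attach, Finset.sum_filter, Finset.sum_attach T (fun s => if s ∈ B then h s else 0)]
  rw [← Finset.sum_filter]
  congr 1
  exact Finset.filter_mem_eq_inter.trans (by rw [Finset.inter_comm, Finset.inter_eq_left.mpr hB])

theorem strassen_counts {S : Type*} [MetricSpace S] (T U : Finset S)
    (w v : S → ℝ) (hw0 : ∀ s ∈ T, 0 ≤ w s)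
    {ε' : ℝ} (hε' : 0 < ε')
    (hyp : ∀ B ⊆ T, ∑ s ∈ B, w s ≤ (∑ t ∈ U.filter (fun t => ∃ s ∈ B, dist t s < ε'), v t) + ε')
    (N' : ℕ) (hN'pos : 0 < N') :
    ∃ mc : S → S → ℕ,
      (∀ s t, mc s t ≠ 0 → dist t s < ε') ∧
      (∀ s ∈ T, ∑ t ∈ U, mc s t ≤ ⌊w s * N'⌋₊) ∧
      (∀ t ∈ U, ∑ s ∈ T, mc s t ≤ ⌊v t * N'⌋₊) ∧
      (∑ s ∈ T, ⌊w s * N'⌋₊ ≤ (∑ s ∈ T, ∑ t ∈ U, mc s t) + (⌈ε' * N'⌉₊ + U.card)) := by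
  classical
  have hN0 : (0:ℝ) < N' := by exact_mod_cast hN'pos
  set K : ℕ := ⌈ε' * (N':ℝ)⌉₊ + U.card with hK
  set f : S → ℕ := fun s => ⌊w s * N'⌋₊ with hf
  set g : S → ℕ := fun t => ⌊v t * N'⌋₊ with hg
  set ι := Σ s : {x // x ∈ T}, Fin (f ↑s) with hι
  set α := (Σ t : {x // x ∈ U}, Fin (g ↑t)) ⊕ Fin K with hα
  set nbhd : ι → Finset α := fun p =>
    Finset.univ.filter (fun a => ∀ q : Σ t : {x // x ∈ U}, Fin (g ↑t),
      a = Sum.inl q → dist (↑q.1 : S) (↑p.1 : S) < ε') with hnbhd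
  have hnb : ∀ (p : ι) (a : α), a ∈ nbhd p ↔ ∀ q : Σ t : {x // x ∈ U}, Fin (g ↑t),
      a = Sum.inl q → dist (↑q.1 : S) (↑p.1 : S) < ε' := by
    intro p a
    rw [hnbhd]
    simp [Finset.mem_filter]
  -- Hall condition
  have hall : ∀ A' : Finset ι, A'.card ≤ (A'.biUnion nbhd).card := by
    intro A'
    rcases A'.eq_empty_or_nonempty with rfl | hA'ne
    · simp
    set B : Finset S := A'.image (fun p => (↑p.1 : S)) with hB
    have hBT : B ⊆ T := by
      intro s hs
      obtain ⟨p, _, rfl⟩ := Finset.mem_image.mp hs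
      exact p.1.2
    set W : Finset S := U.filter (fun t => ∃ s ∈ B, dist t s < ε') with hW
    have hcardA : A'.card ≤ ∑ s ∈ B, f s := by
      have hsub : A' ⊆ (Finset.univ.filter (fun s : {x // x ∈ T} => ↑s ∈ B)).sigma
          (fun s => Finset.univ) := by
        intro p hp
        rw [Finset.mem_sigma]
        exact ⟨Finset.mem_filter.mpr ⟨Finset.mem_univ _, Finset.mem_image_of_mem _ hp⟩,
          Finset.mem_univ _⟩
      calc A'.card ≤ _ := Finset.card_le_card hsub
        _ = ∑ s ∈ Finset.univ.filter (fun s : {x // x ∈ T} => ↑s ∈ B), f ↑s := by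
            rw [Finset.card_sigma]; simp
        _ = ∑ s ∈ B, f s := sum_attach_filter T B hBT f
    have hbi : A'.biUnion nbhd =
        ((Finset.univ.filter (fun t : {x // x ∈ U} => ↑t ∈ W)).sigma
          (fun t => Finset.univ)).image Sum.inl ∪ (Finset.univ : Finset (Fin K)).image Sum.inr := by
      ext a
      rw [Finset.mem_biUnion, Finset.mem_union]
      cases a with
      | inl q =>
        constructor
        · rintro ⟨p, hp, hcond⟩
          rw [hnb] at hcond
          have hdist := hcond q rfl
          refine Or.inl (Finset.mem_image.mpr ⟨q, ?_, rfl⟩)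
          rw [Finset.mem_sigma]
          refine ⟨Finset.mem_filter.mpr ⟨Finset.mem_univ _, ?_⟩, Finset.mem_univ _⟩
          rw [hW, Finset.mem_filter]
          exact ⟨q.1.2, ⟨↑p.1, Finset.mem_image_of_mem _ hp, hdist⟩⟩
        · rintro (h | h)
          · obtain ⟨q', hq', hEq⟩ := Finset.mem_image.mp h
            obtain rfl := Sum.inl_injective hEq
            have hqW : (↑q'.1 : S) ∈ W := (Finset.mem_filter.mp (Finset.mem_sigma.mp hq').1).2
            rw [hW, Finset.mem_filter] at hqW
            obtain ⟨_, s, hsB, hdist⟩ := hqW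
            obtain ⟨p, hp, rfl⟩ := Finset.mem_image.mp hsB
            refine ⟨p, hp, ?_⟩
            rw [hnb]
            rintro q'' hq''
            obtain rfl := Sum.inl_injective hq''
            exact hdist
          · obtain ⟨k, _, hEq⟩ := Finset.mem_image.mp h
            exact absurd hEq (by simp)
      | inr k =>
        constructor
        · intro _
          exact Or.inr (Finset.mem_image.mpr ⟨k, Finset.mem_univ _, rfl⟩)
        · intro _
          obtain ⟨p, hp⟩ := hA'ne
          refine ⟨p, hp, ?_⟩
          rw [hnb]
          rintro q hq
          exact absurd hq (by simp)
    have hcardbi : (A'.biUnion nbhd).card = (∑ t ∈ W, g t) + K := by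
      rw [hbi, Finset.card_union_of_disjoint, Finset.card_image_of_injective _ Sum.inl_injective,
        Finset.card_image_of_injective _ Sum.inr_injective, Finset.card_sigma]
      · congr 1
        · calc ∑ t ∈ Finset.univ.filter (fun t : {x // x ∈ U} => ↑t ∈ W), (Finset.univ : Finset (Fin (g ↑t))).card
              = ∑ t ∈ Finset.univ.filter (fun t : {x // x ∈ U} => ↑t ∈ W), g ↑t := by
                apply Finset.sum_congr rfl; intro t _; simp
            _ = ∑ t ∈ W, g t := sum_attach_filter U W (Finset.filter_subset _ _) g
        · simp
      · rw [Finset.disjoint_left]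
        rintro a ha hb
        obtain ⟨q, _, rfl⟩ := Finset.mem_image.mp ha
        obtain ⟨k, _, hEq⟩ := Finset.mem_image.mp hb
        exact absurd hEq (by simp)
    -- the real-number chain
    have hWU : W ⊆ U := Finset.filter_subset _ _
    have chain : (∑ s ∈ B, (f s : ℝ)) ≤ (∑ t ∈ W, (g t : ℝ)) + (K : ℝ) := by
      have h1 : ∑ s ∈ B, (f s : ℝ) ≤ ∑ s ∈ B, w s * N' := by
        apply Finset.sum_le_sum
        intro s hs
        exact Nat.floor_le (mul_nonneg (hw0 s (hBT hs)) (by positivity))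
      have h2 : ∑ s ∈ B, w s * N' = (∑ s ∈ B, w s) * N' := by rw [Finset.sum_mul]
      have h3 : (∑ s ∈ B, w s) * N' ≤ ((∑ t ∈ W, v t) + ε') * N' := by
        apply mul_le_mul_of_nonneg_right (hyp B hBT) (by positivity)
      have h4 : ((∑ t ∈ W, v t) + ε') * N' = (∑ t ∈ W, v t * N') + ε' * N' := by
        rw [add_mul, Finset.sum_mul]
      have h5 : ∑ t ∈ W, v t * N' ≤ ∑ t ∈ W, ((g t : ℝ) + 1) := by
        apply Finset.sum_le_sum
        intro t _
        exact (Nat.lt_floor_add_one _).le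
      have h6 : ∑ t ∈ W, ((g t : ℝ) + 1) = (∑ t ∈ W, (g t:ℝ)) + W.card := by
        rw [Finset.sum_add_distrib]; simp
      have h7 : ε' * N' ≤ (⌈ε' * (N':ℝ)⌉₊ : ℝ) := Nat.le_ceil _
      have h8 : (W.card : ℝ) ≤ U.card := by exact_mod_cast Finset.card_le_card hWU
      have h9 : (K:ℝ) = (⌈ε' * (N':ℝ)⌉₊ : ℝ) + U.card := by rw [hK]; push_cast; ring
      linarith
    have hfin : (A'.card : ℝ) ≤ ((A'.biUnion nbhd).card : ℝ) := by
      rw [hcardbi]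
      push_cast
      have hA2 : (A'.card : ℝ) ≤ ∑ s ∈ B, (f s : ℝ) := by
        calc (A'.card : ℝ) ≤ ((∑ s ∈ B, f s : ℕ) : ℝ) := by exact_mod_cast hcardA
          _ = ∑ s ∈ B, (f s : ℝ) := by push_cast; rfl
      have hK2 : ((∑ t ∈ W, g t + K : ℕ) : ℝ) = (∑ t ∈ W, (g t : ℝ)) + (K : ℝ) := by
        push_cast; rfl
      linarith [chain, hA2, hK2]
    exact_mod_cast hfin
  obtain ⟨F, hFinj, hFmem⟩ := (Finset.all_card_le_biUnion_card_iff_exists_injective nbhd).mp hall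
  set mset : S → S → Finset ι := fun s t =>
    Finset.univ.filter (fun p : ι => (↑p.1 : S) = s ∧ ∃ q, F p = Sum.inl q ∧ (↑q.1 : S) = t)
    with hmset
  set mc : S → S → ℕ := fun s t => (mset s t).card with hmc
  -- (C) edges
  have edges : ∀ s t, mc s t ≠ 0 → dist t s < ε' := by
    intro s t hst
    obtain ⟨p, hp⟩ := Finset.card_pos.mp (Nat.pos_of_ne_zero hst)
    rw [hmset] at hp
    obtain ⟨hps, q, hpq, hqt⟩ := (Finset.mem_filter.mp hp).2
    have := (hnb p (F p)).mp (hFmem p) q hpq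
    rw [hqt, hps] at this
    exact this
  -- (A) row bound
  have rowbound : ∀ s, s ∈ T → ∑ t ∈ U, mc s t ≤ f s := by
    intro s hs
    have hdisj : ∀ t ∈ U, ∀ t' ∈ U, t ≠ t' → Disjoint (mset s t) (mset s t') := by
      intro t _ t' _ htt'
      rw [Finset.disjoint_left]
      intro p hp hp'
      rw [hmset] at hp hp'
      obtain ⟨-, q, hq, hqt⟩ := (Finset.mem_filter.mp hp).2
      obtain ⟨-, q', hq', hqt'⟩ := (Finset.mem_filter.mp hp').2
      obtain rfl := Sum.inl_injective (hq.symm.trans hq')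
      exact htt' (hqt.symm.trans hqt')
    rw [hmc]
    simp only []
    rw [← Finset.card_biUnion hdisj]
    apply Finset.card_le_card (t := ({(⟨s, hs⟩ : {x // x ∈ T})} : Finset _).sigma
      (fun _ => Finset.univ)) ?_ |>.trans
    · rw [Finset.card_sigma]
      simp
    · intro p hp
      obtain ⟨t, -, hpt⟩ := Finset.mem_biUnion.mp hp
      rw [hmset] at hpt
      have h1 := (Finset.mem_filter.mp hpt).2.1
      rw [Finset.mem_sigma]
      exact ⟨Finset.mem_singleton.mpr (Subtype.ext h1), Finset.mem_univ _⟩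
  -- (B) column bound
  have colbound : ∀ t, t ∈ U → ∑ s ∈ T, mc s t ≤ g t := by
    intro t ht
    have hdisj : ∀ s ∈ T, ∀ s' ∈ T, s ≠ s' → Disjoint (mset s t) (mset s' t) := by
      intro s _ s' _ hss'
      rw [Finset.disjoint_left]
      intro p hp hp'
      have h1 := ((Finset.mem_filter.mp hp).2).1
      have h2 := ((Finset.mem_filter.mp hp').2).1
      exact hss' (h1.symm.trans h2)
    rw [hmc]
    simp only []
    rw [← Finset.card_biUnion hdisj]
    set Rt := T.biUnion (fun s => mset s t) with hRt
    have hcardim : Rt.card = (Rt.image F).card :=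
      (Finset.card_image_of_injective _ hFinj).symm
    rw [hcardim]
    apply Finset.card_le_card (t := ((Finset.univ.filter
        (fun t' : {x // x ∈ U} => (↑t' : S) = t)).sigma
        (fun _ => Finset.univ)).image Sum.inl) ?_ |>.trans
    · rw [Finset.card_image_of_injective _ Sum.inl_injective, Finset.card_sigma]
      have : Finset.univ.filter (fun t' : {x // x ∈ U} => (↑t' : S) = t)
          = {(⟨t, ht⟩ : {x // x ∈ U})} := by
        ext t'
        simp [Subtype.ext_iff]
      rw [this]
      simp
    · intro a ha
      obtain ⟨p, hp, rfl⟩ := Finset.mem_image.mp ha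
      obtain ⟨s, -, hpt⟩ := Finset.mem_biUnion.mp hp
      obtain ⟨-, q, hq, hqt⟩ := (Finset.mem_filter.mp hpt).2
      rw [hq]
      apply Finset.mem_image_of_mem
      rw [Finset.mem_sigma]
      exact ⟨Finset.mem_filter.mpr ⟨Finset.mem_univ _, hqt⟩, Finset.mem_univ _⟩
  -- (D) total mass lower bound
  have total : (∑ s ∈ T, (f s : ℝ)) - K ≤ ∑ s ∈ T, ∑ t ∈ U, (mc s t : ℝ) := by
    set RR := Finset.univ.filter (fun p : ι => ∃ q, F p = Sum.inl q) with hRR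
    have hsum : ∑ s ∈ T, ∑ t ∈ U, mc s t = RR.card := by
      have hdisj : ∀ st ∈ T ×ˢ U, ∀ st' ∈ T ×ˢ U, st ≠ st' →
          Disjoint (mset st.1 st.2) (mset st'.1 st'.2) := by
        intro st _ st' _ hne
        rw [Finset.disjoint_left]
        intro p hp hp'
        obtain ⟨h1, q, hq, hqt⟩ := (Finset.mem_filter.mp hp).2
        obtain ⟨h1', q', hq', hqt'⟩ := (Finset.mem_filter.mp hp').2
        obtain rfl := Sum.inl_injective (hq.symm.trans hq')
        exact hne (Prod.ext (h1.symm.trans h1') (hqt.symm.trans hqt'))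
      have hU : (T ×ˢ U).biUnion (fun st => mset st.1 st.2) = RR := by
        ext p
        rw [Finset.mem_biUnion, hRR, Finset.mem_filter]
        constructor
        · rintro ⟨st, -, hpt⟩
          obtain ⟨-, q, hq, -⟩ := (Finset.mem_filter.mp hpt).2
          exact ⟨Finset.mem_univ _, q, hq⟩
        · rintro ⟨-, q, hq⟩
          refine ⟨((↑p.1 : S), (↑q.1 : S)), Finset.mk_mem_product p.1.2 q.1.2, ?_⟩
          rw [hmset]
          exact Finset.mem_filter.mpr ⟨Finset.mem_univ _, rfl, q, hq, rfl⟩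
      rw [← hU, Finset.card_biUnion hdisj, Finset.sum_product]
    have hcompl : (Fintype.card ι : ℝ) - K ≤ RR.card := by
      have hsplit : RR.card + (Finset.univ.filter
          (fun p : ι => ¬ ∃ q, F p = Sum.inl q)).card = Fintype.card ι := by
        rw [Finset.card_filter_add_card_filter_not]
        exact Finset.card_univ
      have hCC : (Finset.univ.filter (fun p : ι => ¬ ∃ q, F p = Sum.inl q)).card ≤ K := by
        set CC := Finset.univ.filter (fun p : ι => ¬ ∃ q, F p = Sum.inl q) with hCCdef
        have : CC.card = (CC.image F).card := (Finset.card_image_of_injective _ hFinj).symm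
        rw [this]
        have hsub : CC.image F ⊆ (Finset.univ : Finset (Fin K)).image Sum.inr := by
          intro a ha
          obtain ⟨p, hp, rfl⟩ := Finset.mem_image.mp ha
          have hnoq := (Finset.mem_filter.mp hp).2
          rcases hFp : F p with q | k
          · exact absurd ⟨q, hFp⟩ hnoq
          · exact Finset.mem_image_of_mem _ (Finset.mem_univ _)
        calc (CC.image F).card ≤ _ := Finset.card_le_card hsub
          _ ≤ K := by
            rw [Finset.card_image_of_injective _ Sum.inr_injective]
            simp
      have := hsplit
      have h1 : (RR.card : ℝ) + (Finset.univ.filter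
          (fun p : ι => ¬ ∃ q, F p = Sum.inl q)).card = Fintype.card ι := by exact_mod_cast this
      have h2 : ((Finset.univ.filter (fun p : ι => ¬ ∃ q, F p = Sum.inl q)).card : ℝ) ≤ K := by
        exact_mod_cast hCC
      linarith
    have hcard : (Fintype.card ι : ℝ) = ∑ s ∈ T, (f s : ℝ) := by
      rw [Fintype.card_sigma]
      push_cast
      rw [Finset.univ_eq_attach]
      norm_cast
      calc ∑ s ∈ T.attach, Fintype.card (Fin (f ↑s)) = ∑ s ∈ T.attach, f ↑s := by simp
        _ = ∑ s ∈ T, f s := Finset.sum_attach T f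
    have hsum' : (∑ s ∈ T, ∑ t ∈ U, (mc s t : ℝ)) = (RR.card : ℝ) := by
      exact_mod_cast congrArg (Nat.cast : ℕ → ℝ) hsum
    rw [hsum', ← hcard]
    exact hcompl
  refine ⟨mc, edges, rowbound, colbound, ?_⟩
  have : (∑ s ∈ T, (⌊w s * (N':ℝ)⌋₊ : ℝ)) ≤ (∑ s ∈ T, ∑ t ∈ U, (mc s t : ℝ)) + ((⌈ε' * (N':ℝ)⌉₊ : ℕ) + (U.card:ℕ) : ℝ) := by
    have hKK : ((K:ℕ):ℝ) = ((⌈ε' * (N':ℝ)⌉₊ + U.card : ℕ) : ℝ) := by rw [hK]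
    push_cast at hKK ⊢
    simp only [hf] at total
    push_cast at total
    linarith
  exact_mod_cast this

theorem strassen_finite {S : Type*} [MetricSpace S] (T U : Finset S)
    (w v : S → ℝ) (hw0 : ∀ s ∈ T, 0 ≤ w s) (hv0 : ∀ t ∈ U, 0 ≤ v t)
    (hw1 : ∑ s ∈ T, w s = 1) (hv1 : ∑ t ∈ U, v t = 1)
    {ε' δ : ℝ} (hε' : 0 < ε') (hδ : 0 < δ)
    (hyp : ∀ B ⊆ T, ∑ s ∈ B, w s ≤ (∑ t ∈ U.filter (fun t => ∃ s ∈ B, dist t s < ε'), v t) + ε') :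
    ∃ π : S → S → ℝ, (∀ s ∈ T, ∀ t ∈ U, 0 ≤ π s t) ∧
      (∀ s ∈ T, ∑ t ∈ U, π s t = w s) ∧
      (∀ t ∈ U, ∑ s ∈ T, π s t = v t) ∧
      (∑ s ∈ T, ∑ t ∈ U.filter (fun t => ¬ dist t s < ε'), π s t) ≤ ε' + δ := by
  classical
  obtain ⟨N, hN⟩ := exists_nat_ge ((T.card + U.card + 1 : ℝ) / δ)
  set N' : ℕ := N + 1 with hN'
  have hNδ : (T.card + U.card + 1 : ℝ) ≤ δ * N' := by
    rw [div_le_iff₀ hδ] at hN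
    have h1 : (N:ℝ) ≤ N' := by push_cast [hN']; linarith
    nlinarith
  obtain ⟨mc, edges, rowbound, colbound, totalN⟩ :=
    strassen_counts T U w v hw0 hε' hyp N' (Nat.succ_pos N)
  set f : S → ℕ := fun s => ⌊w s * N'⌋₊ with hf
  set g : S → ℕ := fun t => ⌊v t * N'⌋₊ with hg
  set K : ℕ := ⌈ε' * (N':ℝ)⌉₊ + U.card with hK
  have hNpos : (0:ℝ) < N' := by positivity
  have total : (∑ s ∈ T, (f s : ℝ)) - K ≤ ∑ s ∈ T, ∑ t ∈ U, (mc s t : ℝ) := by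
    have h1 : ((∑ s ∈ T, f s : ℕ) : ℝ) ≤ (((∑ s ∈ T, ∑ t ∈ U, mc s t) + K : ℕ) : ℝ) :=
      Nat.cast_le.mpr totalN
    push_cast at h1
    linarith
  set π₀ : S → S → ℝ := fun s t => (mc s t : ℝ) / N' with hπ₀def
  have hπ₀0 : ∀ s t, 0 ≤ π₀ s t := fun s t => by positivity
  set rr : S → ℝ := fun s => w s - ∑ t ∈ U, π₀ s t with hrdef
  set cc : S → ℝ := fun t => v t - ∑ s ∈ T, π₀ s t with hcdef
  set D : ℝ := ∑ s ∈ T, rr s with hD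
  have hr0 : ∀ s ∈ T, 0 ≤ rr s := by
    intro s hs
    have h1 : ∑ t ∈ U, π₀ s t = (∑ t ∈ U, (mc s t : ℝ)) / N' := by
      rw [Finset.sum_div]
    have h2 : (∑ t ∈ U, (mc s t : ℝ)) ≤ (f s : ℝ) := by exact_mod_cast rowbound s hs
    have h3 : (f s : ℝ) ≤ w s * N' := Nat.floor_le (mul_nonneg (hw0 s hs) hNpos.le)
    have : ∑ t ∈ U, π₀ s t ≤ w s := by
      rw [h1, div_le_iff₀ hNpos]
      linarith
    simp only [hrdef]
    linarith
  have hc0 : ∀ t ∈ U, 0 ≤ cc t := by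
    intro t ht
    have h1 : ∑ s ∈ T, π₀ s t = (∑ s ∈ T, (mc s t : ℝ)) / N' := by
      rw [Finset.sum_div]
    have h2 : (∑ s ∈ T, (mc s t : ℝ)) ≤ (g t : ℝ) := by exact_mod_cast colbound t ht
    have h3 : (g t : ℝ) ≤ v t * N' := Nat.floor_le (mul_nonneg (hv0 t ht) hNpos.le)
    have : ∑ s ∈ T, π₀ s t ≤ v t := by
      rw [h1, div_le_iff₀ hNpos]
      linarith
    simp only [hcdef]
    linarith
  have hDc : ∑ t ∈ U, cc t = D := by
    simp only [hcdef, hD, hrdef]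
    rw [Finset.sum_sub_distrib, Finset.sum_sub_distrib, hv1, hw1, Finset.sum_comm]
  have hD0 : 0 ≤ D := Finset.sum_nonneg hr0
  have hDle : D ≤ ε' + δ := by
    have hM : (∑ s ∈ T, (f s : ℝ) - K) / N' ≤ ∑ s ∈ T, ∑ t ∈ U, π₀ s t := by
      simp only [hπ₀def]
      rw [div_le_iff₀ hNpos]
      have : ∑ s ∈ T, ∑ t ∈ U, (mc s t : ℝ) / N' = (∑ s ∈ T, ∑ t ∈ U, (mc s t : ℝ)) / N' := by
        rw [Finset.sum_div]
        apply Finset.sum_congr rfl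
        intro s _
        rw [Finset.sum_div]
      rw [this, div_mul_cancel₀ _ hNpos.ne']
      exact total
    have hf' : (N' : ℝ) - T.card ≤ ∑ s ∈ T, (f s : ℝ) := by
      have : ∀ s ∈ T, w s * N' - 1 ≤ (f s : ℝ) := by
        intro s hs
        have := Nat.lt_floor_add_one (w s * N')
        linarith
      calc (N' : ℝ) - T.card = ∑ s ∈ T, (w s * N' - 1) := by
            rw [Finset.sum_sub_distrib, ← Finset.sum_mul, hw1]
            simp [mul_comm]
        _ ≤ _ := Finset.sum_le_sum this
    have hK' : (K : ℝ) ≤ ε' * N' + 1 + U.card := by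
      have h1 : (⌈ε' * (N':ℝ)⌉₊ : ℝ) < ε' * N' + 1 := Nat.ceil_lt_add_one (by positivity)
      have h2 : (K:ℝ) = (⌈ε' * (N':ℝ)⌉₊ : ℝ) + U.card := by rw [hK]; push_cast; ring
      linarith
    have hDM : D = 1 - ∑ s ∈ T, ∑ t ∈ U, π₀ s t := by
      simp only [hD, hrdef]
      rw [Finset.sum_sub_distrib, hw1]
    rw [hDM]
    have step : 1 - (∑ s ∈ T, (f s:ℝ) - K) / N' ≤ ε' + δ := by
      have e1 : 1 - (∑ s ∈ T, (f s:ℝ) - K)/N' = ((N':ℝ) - (∑ s ∈ T, (f s:ℝ) - K))/N' := by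
        field_simp
      rw [e1, div_le_iff₀ hNpos]
      nlinarith [hNδ, hf', hK']
    linarith [hM, step]
  refine ⟨fun s t => π₀ s t + rr s * cc t / D, ?_, ?_, ?_, ?_⟩
  · intro s hs t ht
    have h1 : 0 ≤ rr s * cc t / D := div_nonneg (mul_nonneg (hr0 s hs) (hc0 t ht)) hD0
    exact add_nonneg (hπ₀0 s t) h1
  · -- row marginals
    intro s hs
    have hsplit : ∑ t ∈ U, (π₀ s t + rr s * cc t / D) =
        (∑ t ∈ U, π₀ s t) + (rr s / D) * ∑ t ∈ U, cc t := by
      rw [Finset.sum_add_distrib, Finset.mul_sum]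
      congr 1
      apply Finset.sum_congr rfl
      intro t _
      ring
    have hformula : rr s = w s - ∑ t ∈ U, π₀ s t := by rw [hrdef]
    rw [hsplit, hDc]
    rcases eq_or_ne D 0 with hDeq | hDne
    · have hsum0 : ∑ x ∈ T, rr x = 0 := by rw [← hD]; exact hDeq
      have hrs : rr s = 0 := (Finset.sum_eq_zero_iff_of_nonneg hr0).mp hsum0 s hs
      rw [hDeq]
      simp only [div_zero, zero_mul, add_zero]
      linarith [hformula, hrs]
    · rw [div_mul_cancel₀ _ hDne]
      linarith [hformula]
  · -- column marginals
    intro t ht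
    have hsplit : ∑ s ∈ T, (π₀ s t + rr s * cc t / D) =
        (∑ s ∈ T, π₀ s t) + (cc t / D) * ∑ s ∈ T, rr s := by
      rw [Finset.sum_add_distrib, Finset.mul_sum]
      congr 1
      apply Finset.sum_congr rfl
      intro s _
      ring
    have hformula : cc t = v t - ∑ s ∈ T, π₀ s t := by rw [hcdef]
    rw [hsplit, ← hD]
    rcases eq_or_ne D 0 with hDeq | hDne
    · have hct : cc t = 0 := by
        have hsumc : ∑ x ∈ U, cc x = 0 := by rw [hDc]; exact hDeq
        exact (Finset.sum_eq_zero_iff_of_nonneg hc0).mp hsumc t ht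
      rw [hDeq]
      simp only [div_zero, zero_mul, add_zero]
      linarith [hformula, hct]
    · rw [div_mul_cancel₀ _ hDne]
      linarith [hformula]
  · -- bad mass
    have hπ₀bad : ∀ s, ∀ t ∈ U.filter (fun t => ¬ dist t s < ε'), π₀ s t = 0 := by
      intro s t htf
      have hnd := (Finset.mem_filter.mp htf).2
      have : mc s t = 0 := by
        by_contra hne
        exact hnd (edges s t hne)
      simp only [hπ₀def, this]
      simp
    have hstep : ∀ s ∈ T, ∑ t ∈ U.filter (fun t => ¬ dist t s < ε'), (π₀ s t + rr s * cc t / D)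
        ≤ rr s * D / D := by
      intro s hs
      have h1 : ∑ t ∈ U.filter (fun t => ¬ dist t s < ε'), (π₀ s t + rr s * cc t / D)
          = ∑ t ∈ U.filter (fun t => ¬ dist t s < ε'), rr s * cc t / D := by
        apply Finset.sum_congr rfl
        intro t htf
        rw [hπ₀bad s t htf, zero_add]
      rw [h1]
      have h2 : ∑ t ∈ U.filter (fun t => ¬ dist t s < ε'), rr s * cc t / D
          ≤ ∑ t ∈ U, rr s * cc t / D := by
        apply Finset.sum_le_sum_of_subset_of_nonneg (Finset.filter_subset _ _)
        intro t htU _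
        exact div_nonneg (mul_nonneg (hr0 s hs) (hc0 t htU)) hD0
      have h3 : ∑ t ∈ U, rr s * cc t / D = rr s * (∑ t ∈ U, cc t) / D := by
        rw [Finset.mul_sum, Finset.sum_div]
      rw [h3, hDc] at h2
      exact h2
    calc ∑ s ∈ T, ∑ t ∈ U.filter (fun t => ¬ dist t s < ε'), (π₀ s t + rr s * cc t / D)
        ≤ ∑ s ∈ T, rr s * D / D := Finset.sum_le_sum hstep
      _ ≤ ε' + δ := by
          rcases eq_or_ne D 0 with hDeq | hDne
          · rw [hDeq]
            simp only [mul_zero, zero_div]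
            simp
            positivity
          · have : ∀ s ∈ T, rr s * D / D = rr s := by
              intro s _
              rw [mul_div_assoc, div_self hDne, mul_one]
            rw [Finset.sum_congr rfl this, ← hD]
            exact hDle



lemma meas_finset {S : Type*} [MeasurableSpace S] [MeasurableSingletonClass S]
    (μ : Measure S) (B : Finset S) : μ ↑B = ∑ s ∈ B, μ {s} := by
  classical
  have h1 : (↑B : Set S) = ⋃ s ∈ B, {s} := by ext s; simp
  rw [h1, measure_biUnion_finset ?_ (fun s _ => measurableSet_singleton s)]
  intro s _ t _ hst
  simp [Function.onFun, Set.disjoint_singleton, hst]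

lemma meas_eq_sum_filter {S : Type*} [MeasurableSpace S] [MeasurableSingletonClass S]
    {μ : Measure S} {T : Finset S} (hT : μ (↑T)ᶜ = 0) {C : Set S} [DecidablePred (· ∈ C)] (hC : MeasurableSet C) :
    μ C = ∑ s ∈ T.filter (· ∈ C), μ {s} := by
  classical
  have h1 : μ C = μ (C ∩ ↑T) := by
    have h2 : μ (C \ ↑T) = 0 := measure_mono_null (diff_subset_compl C ↑T) hT
    have := measure_inter_add_diff (μ := μ) C (T.measurableSet : MeasurableSet (↑T : Set S))
    rw [h2, add_zero] at this
    exact this.symm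
  have h3 : C ∩ ↑T = ↑(T.filter (· ∈ C)) := by
    ext s
    simp [and_comm]
  rw [h1, h3, meas_finset]

lemma FinitelySupported.exists_null_compl {S : Type*} [MeasurableSpace S]
    [MeasurableSingletonClass S] {μ : Measure S} (h : FinitelySupported μ) :
    ∃ T : Finset S, μ (↑T)ᶜ = 0 := by
  classical
  obtain ⟨n, c, a, hsum, heq⟩ := h
  refine ⟨Finset.image a Finset.univ, ?_⟩
  rw [heq]
  rw [Measure.finset_sum_apply]
  apply Finset.sum_eq_zero
  intro i _
  rw [Measure.smul_apply, Measure.dirac_apply' _ (Finset.image a Finset.univ).measurableSet.compl]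
  have : a i ∈ (↑(Finset.image a Finset.univ) : Set S) := by simp
  rw [Set.indicator_of_notMem (by simpa using this)]
  simp

open scoped Classical in
noncomputable def listPiece {Ω S : Type*} (B : S × S → Set Ω) (t₀ : S) : List (S × S) → Ω → S
  | [], _ => t₀
  | p :: l, ω => if ω ∈ B p then p.2 else listPiece B t₀ l ω

lemma listPiece_measurable {Ω S : Type*} [MeasurableSpace Ω] [MeasurableSpace S]
    [MeasurableSingletonClass S] (B : S × S → Set Ω) (hB : ∀ p, MeasurableSet (B p)) (t₀ : S)
    (l : List (S × S)) : Measurable (listPiece B t₀ l) := by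
  induction l with
  | nil => exact measurable_const
  | cons p l ih =>
    exact Measurable.piecewise (hB p) measurable_const ih

lemma listPiece_eq {Ω S : Type*} (B : S × S → Set Ω) (t₀ : S) (l : List (S × S))
    (hdisj : l.Pairwise (fun p q => Disjoint (B p) (B q)))
    {p : S × S} (hp : p ∈ l) {ω : Ω} (hω : ω ∈ B p) : listPiece B t₀ l ω = p.2 := by
  induction l with
  | nil => simp at hp
  | cons q l ih =>
    rw [List.pairwise_cons] at hdisj
    rcases List.mem_cons.mp hp with rfl | hpl
    · simp only [listPiece, if_pos hω]
    · have hωq : ω ∉ B q := fun h => (hdisj.1 p hpl).ne_of_mem h hω rfl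
      simp only [listPiece, if_neg hωq]
      exact ih hdisj.2 hpl

/-- If `μ`, `ν` are finitely supported probability measures with `q(μ,ν) < ε`, then for any
random variable `X` with law `μ` on a nonatomic probability space there is `Y` on the same
space with law `ν` and `ρ(X,Y) < ε`. -/
theorem stmt3 {Ω S : Type*} [MeasurableSpace Ω] [MeasurableSpace S] [MetricSpace S]
    [BorelSpace S] [CompleteSpace S] [TopologicalSpace.SeparableSpace S]
    (P : Measure Ω) [IsProbabilityMeasure P] (hna : Nonatomic P)
    (μ ν : Measure S) [IsProbabilityMeasure μ] [IsProbabilityMeasure ν]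
    (hμ : FinitelySupported μ) (hν : FinitelySupported ν)
    {ε : ℝ} (hq : levyProkhorovDist μ ν < ε)
    (X : Ω → S) (hX : Measurable X) (hlaw : P.map X = μ) :
    ∃ Y : Ω → S, Measurable Y ∧ P.map Y = ν ∧ kyFanDist P X Y < ε := by
  classical
  obtain ⟨T, hT⟩ := hμ.exists_null_compl
  obtain ⟨U, hU⟩ := hν.exists_null_compl
  set w : S → ℝ := fun s => (μ {s}).toReal with hwdef
  set v : S → ℝ := fun t => (ν {t}).toReal with hvdef
  have hμT : ∑ s ∈ T, μ {s} = 1 := by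
    have h := meas_eq_sum_filter (μ := μ) hT (C := Set.univ) MeasurableSet.univ
    simpa using h.symm
  have hνU : ∑ t ∈ U, ν {t} = 1 := by
    have h := meas_eq_sum_filter (μ := ν) hU (C := Set.univ) MeasurableSet.univ
    simpa using h.symm
  have hwsum : ∑ s ∈ T, w s = 1 := by
    have h := ENNReal.toReal_sum (s := T) (f := fun s => μ {s})
      (fun a _ => measure_ne_top μ _)
    rw [hμT] at h
    simpa using h.symm
  have hvsum : ∑ t ∈ U, v t = 1 := by
    have h := ENNReal.toReal_sum (s := U) (f := fun t => ν {t})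
      (fun a _ => measure_ne_top ν _)
    rw [hνU] at h
    simpa using h.symm
  have hw0 : ∀ s ∈ T, 0 ≤ w s := fun s _ => ENNReal.toReal_nonneg
  have hv0 : ∀ t ∈ U, 0 ≤ v t := fun t _ => ENNReal.toReal_nonneg
  have hUne : U.Nonempty := by
    rcases U.eq_empty_or_nonempty with rfl | h
    · simp at hνU
    · exact h
  obtain ⟨t₀, ht₀⟩ := hUne
  -- choose ε', δ
  have hd0 : 0 ≤ levyProkhorovDist μ ν := ENNReal.toReal_nonneg
  set ε' : ℝ := (levyProkhorovDist μ ν + ε)/2 with hε'def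
  have hd0ε' : levyProkhorovDist μ ν < ε' := by rw [hε'def]; linarith
  have hε'pos : 0 < ε' := lt_of_le_of_lt hd0 hd0ε'
  have hε'ε : ε' < ε := by rw [hε'def]; linarith
  set δ : ℝ := (ε - ε')/2 with hδdef
  have hδpos : 0 < δ := by rw [hδdef]; linarith
  have hε''lt : ε' + δ < ε := by rw [hδdef]; linarith
  -- the LP inequality
  have hedist : levyProkhorovEDist μ ν < ENNReal.ofReal ε' := by
    rw [ENNReal.lt_ofReal_iff_toReal_lt (levyProkhorovEDist_ne_top μ ν)]
    exact hd0ε'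
  have hyp : ∀ B ⊆ T, ∑ s ∈ B, w s ≤
      (∑ t ∈ U.filter (fun t => ∃ s ∈ B, dist t s < ε'), v t) + ε' := by
    intro B hB
    have hineq := left_measure_le_of_levyProkhorovEDist_lt hedist
      (B := (↑B : Set S)) B.measurableSet
    rw [ENNReal.toReal_ofReal hε'pos.le] at hineq
    have hL : μ ↑B = ∑ s ∈ B, μ {s} := meas_finset μ B
    have hthick : ν (Metric.thickening ε' ↑B)
        = ∑ t ∈ U.filter (· ∈ Metric.thickening ε' (↑B : Set S)), ν {t} :=
      meas_eq_sum_filter hU Metric.isOpen_thickening.measurableSet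
    have hfiltereq : U.filter (· ∈ Metric.thickening ε' (↑B : Set S))
        = U.filter (fun t => ∃ s ∈ B, dist t s < ε') := by
      apply Finset.filter_congr
      intro t _
      simp [Metric.mem_thickening_iff]
    have hRne : ν (Metric.thickening ε' ↑B) + ENNReal.ofReal ε' ≠ ⊤ :=
      ENNReal.add_ne_top.mpr ⟨measure_ne_top _ _, ENNReal.ofReal_ne_top⟩
    have hmono := ENNReal.toReal_mono hRne hineq
    rw [ENNReal.toReal_add (measure_ne_top _ _) ENNReal.ofReal_ne_top,
      ENNReal.toReal_ofReal hε'pos.le] at hmono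
    calc ∑ s ∈ B, w s = (∑ s ∈ B, μ {s}).toReal :=
          (ENNReal.toReal_sum (fun a _ => measure_ne_top μ _)).symm
      _ = (μ ↑B).toReal := by rw [hL]
      _ ≤ (ν (Metric.thickening ε' ↑B)).toReal + ε' := hmono
      _ = (∑ t ∈ U.filter (fun t => ∃ s ∈ B, dist t s < ε'), ν {t}).toReal + ε' := by
          rw [hthick, hfiltereq]
      _ = (∑ t ∈ U.filter (fun t => ∃ s ∈ B, dist t s < ε'), v t) + ε' := by
          rw [ENNReal.toReal_sum (fun a _ => measure_ne_top ν _)]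
  obtain ⟨π, hπ0, hπrow, hπcol, hπbad⟩ :=
    strassen_finite T U w v hw0 hv0 hwsum hvsum hε'pos hδpos hyp
  -- build partitions of the preimages
  have hAs : ∀ s : S, MeasurableSet (X ⁻¹' {s}) := fun s => hX (measurableSet_singleton s)
  have hPA : ∀ s : S, P (X ⁻¹' {s}) = μ {s} := fun s => by
    rw [← hlaw, Measure.map_apply hX (measurableSet_singleton s)]
  have hpart : ∀ s, s ∈ T → ∃ Bf : S → Set Ω, (∀ t, MeasurableSet (Bf t)) ∧
      (∀ t ∈ U, Bf t ⊆ X ⁻¹' {s}) ∧ (∀ t ∈ U, P (Bf t) = ENNReal.ofReal (π s t)) ∧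
      ((↑U : Set S).PairwiseDisjoint Bf) := by
    intro s hs
    apply hna.exists_partition U (X ⁻¹' {s}) (hAs s)
    rw [hPA s, ← ENNReal.ofReal_sum_of_nonneg (fun t ht => hπ0 s hs t ht), hπrow s hs]
    simp only [hwdef]
    exact ENNReal.ofReal_toReal (measure_ne_top μ _)
  choose! Bfun hBm hBsub hBP hBdisj using hpart
  set B : S × S → Set Ω := fun p => if p.1 ∈ T ∧ p.2 ∈ U then Bfun p.1 p.2 else ∅ with hBdef
  have hBmeas : ∀ p, MeasurableSet (B p) := by
    intro p
    rw [hBdef]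
    by_cases h : p.1 ∈ T ∧ p.2 ∈ U
    · simpa [h] using hBm p.1 h.1 p.2
    · simp [h]
  have hBval : ∀ p : S × S, p ∈ T ×ˢ U → B p = Bfun p.1 p.2 := by
    intro p hp
    obtain ⟨h1, h2⟩ := Finset.mem_product.mp hp
    simp [hBdef, h1, h2]
  have hBsubA : ∀ p : S × S, p ∈ T ×ˢ U → B p ⊆ X ⁻¹' {p.1} := by
    intro p hp
    obtain ⟨h1, h2⟩ := Finset.mem_product.mp hp
    rw [hBval p hp]
    exact hBsub p.1 h1 p.2 h2
  have hBPval : ∀ p : S × S, p ∈ T ×ˢ U → P (B p) = ENNReal.ofReal (π p.1 p.2) := by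
    intro p hp
    obtain ⟨h1, h2⟩ := Finset.mem_product.mp hp
    rw [hBval p hp]
    exact hBP p.1 h1 p.2 h2
  have hglobal : ∀ p ∈ T ×ˢ U, ∀ q ∈ T ×ˢ U, p ≠ q → Disjoint (B p) (B q) := by
    intro p hp q hq hpq
    obtain ⟨hp1, hp2⟩ := Finset.mem_product.mp hp
    obtain ⟨hq1, hq2⟩ := Finset.mem_product.mp hq
    rcases eq_or_ne p.1 q.1 with h1 | h1
    · have h2 : p.2 ≠ q.2 := fun h => hpq (Prod.ext h1 h)
      rw [hBval p hp, hBval q hq, ← h1]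
      exact hBdisj p.1 hp1 (Finset.mem_coe.mpr hp2) (Finset.mem_coe.mpr hq2) h2
    · refine Disjoint.mono (hBsubA p hp) (hBsubA q hq) ?_
      exact Disjoint.preimage X (by simp [h1])
  -- define Y
  set l : List (S × S) := (T ×ˢ U).toList with hldef
  have hlmem : ∀ p : S × S, p ∈ l ↔ p ∈ T ×ˢ U := fun p => Finset.mem_toList
  have hlpair : l.Pairwise (fun p q => Disjoint (B p) (B q)) :=
    (T ×ˢ U).nodup_toList.pairwise_of_forall_ne (fun p hp q hq hpq =>
      hglobal p ((hlmem p).mp hp) q ((hlmem q).mp hq) hpq)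
  set Y : Ω → S := listPiece B t₀ l with hYdef
  have hYmeas : Measurable Y := listPiece_measurable B hBmeas t₀ l
  have hYon : ∀ p : S × S, p ∈ T ×ˢ U → ∀ ω ∈ B p, Y ω = p.2 := fun p hp ω hω =>
    listPiece_eq B t₀ l hlpair ((hlmem p).mpr hp) hω
  -- the union has full measure
  set G : Set Ω := ⋃ p ∈ T ×ˢ U, B p with hGdef
  have hGmeas : MeasurableSet G := by
    apply MeasurableSet.biUnion (Finset.countable_toSet _)
    exact fun p _ => hBmeas p
  have hdisjcoe : (↑(T ×ˢ U) : Set (S × S)).PairwiseDisjoint B := by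
    intro p hp q hq hpq
    exact hglobal p (Finset.mem_coe.mp hp) q (Finset.mem_coe.mp hq) hpq
  have hPG : P G = 1 := by
    rw [hGdef, measure_biUnion_finset hdisjcoe (fun p _ => hBmeas p)]
    calc ∑ p ∈ T ×ˢ U, P (B p) = ∑ p ∈ T ×ˢ U, ENNReal.ofReal (π p.1 p.2) :=
          Finset.sum_congr rfl (fun p hp => hBPval p hp)
      _ = ∑ s ∈ T, ∑ t ∈ U, ENNReal.ofReal (π s t) := Finset.sum_product _ _ _
      _ = ∑ s ∈ T, μ {s} := by
          apply Finset.sum_congr rfl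
          intro s hs
          rw [← ENNReal.ofReal_sum_of_nonneg (fun t ht => hπ0 s hs t ht), hπrow s hs]
          simp only [hwdef]
          exact ENNReal.ofReal_toReal (measure_ne_top μ _)
      _ = 1 := hμT
  have hGc : P Gᶜ = 0 := by
    rw [measure_compl hGmeas (measure_ne_top P G), hPG, measure_univ, tsub_self]
  -- law of Y
  have hlawY : ∀ C : Set S, MeasurableSet C → P (Y ⁻¹' C) = ν C := by
    intro C hC
    have hsplit := measure_inter_add_diff (μ := P) (Y ⁻¹' C) hGmeas
    have hnull : P (Y ⁻¹' C \ G) = 0 :=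
      measure_mono_null (Set.diff_subset_compl _ _) hGc
    have hinter : Y ⁻¹' C ∩ G = ⋃ p ∈ (T ×ˢ U).filter (fun p => p.2 ∈ C), B p := by
      ext ω
      simp only [Set.mem_inter_iff, Set.mem_preimage, hGdef, Set.mem_iUnion, exists_prop,
        Finset.mem_filter]
      constructor
      · rintro ⟨hωC, p, hp, hωp⟩
        exact ⟨p, ⟨hp, by rwa [hYon p hp ω hωp] at hωC⟩, hωp⟩
      · rintro ⟨p, ⟨hp, hpC⟩, hωp⟩
        exact ⟨by rw [hYon p hp ω hωp]; exact hpC, p, hp, hωp⟩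
    have hmeasunion : P (⋃ p ∈ (T ×ˢ U).filter (fun p => p.2 ∈ C), B p)
        = ∑ p ∈ (T ×ˢ U).filter (fun p => p.2 ∈ C), P (B p) := by
      apply measure_biUnion_finset ?_ (fun p _ => hBmeas p)
      intro p hp q hq hpq
      have hp' := Finset.mem_coe.mp hp
      have hq' := Finset.mem_coe.mp hq
      exact hglobal p (Finset.filter_subset _ _ hp') q (Finset.filter_subset _ _ hq') hpq
    have hfilprod : (T ×ˢ U).filter (fun p => p.2 ∈ C) = T ×ˢ (U.filter (· ∈ C)) := by
      ext p
      simp only [Finset.mem_filter, Finset.mem_product]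
      tauto
    calc P (Y ⁻¹' C) = P (Y ⁻¹' C ∩ G) + P (Y ⁻¹' C \ G) := hsplit.symm
      _ = P (Y ⁻¹' C ∩ G) := by rw [hnull, add_zero]
      _ = ∑ p ∈ (T ×ˢ U).filter (fun p => p.2 ∈ C), P (B p) := by rw [hinter, hmeasunion]
      _ = ∑ p ∈ T ×ˢ (U.filter (· ∈ C)), ENNReal.ofReal (π p.1 p.2) := by
          rw [← hfilprod]
          apply Finset.sum_congr rfl
          intro p hp
          exact hBPval p (Finset.filter_subset _ _ hp)
      _ = ∑ s ∈ T, ∑ t ∈ U.filter (· ∈ C), ENNReal.ofReal (π s t) := Finset.sum_product _ _ _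
      _ = ∑ t ∈ U.filter (· ∈ C), ∑ s ∈ T, ENNReal.ofReal (π s t) := Finset.sum_comm
      _ = ∑ t ∈ U.filter (· ∈ C), ν {t} := by
          apply Finset.sum_congr rfl
          intro t ht
          have htU : t ∈ U := Finset.filter_subset _ _ ht
          rw [← ENNReal.ofReal_sum_of_nonneg (fun s hs => hπ0 s hs t htU), hπcol t htU]
          simp only [hvdef]
          exact ENNReal.ofReal_toReal (measure_ne_top ν _)
      _ = ν C := (meas_eq_sum_filter hU hC).symm
  have hmapY : P.map Y = ν := by
    apply Measure.ext
    intro C hC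
    rw [Measure.map_apply hYmeas hC]
    exact hlawY C hC
  -- Ky Fan bound
  have hbadbound : (P {ω | ε' + δ ≤ dist (X ω) (Y ω)}).toReal ≤ ε' + δ := by
    set bad := (T ×ˢ U).filter (fun p => ¬ dist p.2 p.1 < ε') with hbaddef
    have hcover : {ω | ε' + δ ≤ dist (X ω) (Y ω)} ⊆ (⋃ p ∈ bad, B p) ∪ Gᶜ := by
      intro ω hω
      by_cases hωG : ω ∈ G
      · left
        rw [hGdef] at hωG
        simp only [Set.mem_iUnion, exists_prop] at hωG
        obtain ⟨p, hp, hωp⟩ := hωG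
        have hXω : X ω = p.1 := hBsubA p hp hωp
        have hYω : Y ω = p.2 := hYon p hp ω hωp
        simp only [Set.mem_setOf_eq, hXω, hYω] at hω
        simp only [Set.mem_iUnion, exists_prop]
        refine ⟨p, Finset.mem_filter.mpr ⟨hp, ?_⟩, hωp⟩
        intro hlt
        rw [dist_comm] at hlt
        linarith [hω, hδpos]
      · right; exact hωG
    have hPbound : P {ω | ε' + δ ≤ dist (X ω) (Y ω)} ≤ ENNReal.ofReal (ε' + δ) := by
      calc P {ω | ε' + δ ≤ dist (X ω) (Y ω)} ≤ P ((⋃ p ∈ bad, B p) ∪ Gᶜ) :=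
            measure_mono hcover
        _ ≤ P (⋃ p ∈ (bad : Finset (S × S)), B p) + P Gᶜ := measure_union_le _ _
        _ = P (⋃ p ∈ (bad : Finset (S × S)), B p) := by rw [hGc, add_zero]
        _ ≤ ∑ p ∈ bad, P (B p) := measure_biUnion_finset_le _ _
        _ = ∑ p ∈ bad, ENNReal.ofReal (π p.1 p.2) := by
            apply Finset.sum_congr rfl
            intro p hp
            exact hBPval p (Finset.filter_subset _ _ hp)
        _ = ∑ s ∈ T, ∑ t ∈ U.filter (fun t => ¬ dist t s < ε'), ENNReal.ofReal (π s t) := by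
            rw [hbaddef, Finset.sum_filter, Finset.sum_product]
            apply Finset.sum_congr rfl
            intro s _
            rw [Finset.sum_filter]
        _ = ENNReal.ofReal (∑ s ∈ T, ∑ t ∈ U.filter (fun t => ¬ dist t s < ε'), π s t) := by
            rw [ENNReal.ofReal_sum_of_nonneg]
            · apply Finset.sum_congr rfl
              intro s hs
              rw [ENNReal.ofReal_sum_of_nonneg]
              intro t ht
              exact hπ0 s hs t (Finset.mem_filter.mp ht).1
            · intro s hs
              apply Finset.sum_nonneg
              intro t ht
              exact hπ0 s hs t (Finset.mem_filter.mp ht).1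
        _ ≤ ENNReal.ofReal (ε' + δ) := ENNReal.ofReal_le_ofReal hπbad
    exact ENNReal.toReal_le_of_le_ofReal (by positivity) hPbound
  refine ⟨Y, hYmeas, hmapY, ?_⟩
  have hmem : (ε' + δ) ∈ {x : ℝ | 0 < x ∧ (P {ω | x ≤ dist (X ω) (Y ω)}).toReal ≤ x} :=
    ⟨by positivity, hbadbound⟩
  have hbdd : BddBelow {x : ℝ | 0 < x ∧ (P {ω | x ≤ dist (X ω) (Y ω)}).toReal ≤ x} :=
    ⟨0, fun x hx => hx.1.le⟩
  calc kyFanDist P X Y ≤ ε' + δ := csInf_le hbdd hmem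
    _ < ε := hε''lt
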